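/- Along the family ρ ↦ (r,p_r,p_θ) = (ρ, 0, ±ρ²√(2(1−ρ²))) of relative equilibria of the axisymmetric volcano system, the point ρ = √(2/3) is a critical point of the energy E(ρ) = H₀ restricted to this family, and it is a nondegenerate maximum of E; moreover for ρ ∈ (√(2/3), 1] the linearization of the reduced (r,p_r) dynamics at the relative equilibrium has a positive real eigenvalue (hyperbolic), while for ρ ∈ (0, √(2/3)) the eigenvalues are purely imaginary (elliptic). -/

import Mathlib

open Real

namespace Stmt7

/-- Energy along the family of relative equilibria `ρ ↦ (ρ, 0, ±ρ²√(2(1−ρ²)))`: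
`E(ρ) = (1/2)μ(ρ)²/ρ² + (1/2)ρ²(2−ρ²)` with `μ(ρ)² = 2ρ⁴(1−ρ²)`. -/
noncomputable def Efam (ρ : ℝ) : ℝ :=
  1 / 2 * (2 * ρ ^ 4 * (1 - ρ ^ 2)) / ρ ^ 2 + 1 / 2 * ρ ^ 2 * (2 - ρ ^ 2)

/-- Second derivative `U_μ''(ρ)` of the effective potential
`U_μ(r) = μ²/(2r²) + (1/2)r²(2−r²)` at the relative equilibrium, where
`μ² = 2ρ⁴(1−ρ²)`. -/
noncomputable def Upp (ρ : ℝ) : ℝ :=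
  3 * (2 * ρ ^ 4 * (1 - ρ ^ 2)) / ρ ^ 4 + 2 - 6 * ρ ^ 2

end Stmt7

open Stmt7

lemma Efam_eq : Efam = fun ρ => 2 * ρ ^ 2 - 3 / 2 * ρ ^ 4 := by
  funext x
  unfold Efam
  rcases eq_or_ne x 0 with h | h
  · simp [h]
  · field_simp
    ring

lemma Upp_eq {ρ : ℝ} (h : ρ ≠ 0) : Upp ρ = 8 - 12 * ρ ^ 2 := by
  unfold Upp
  field_simp
  ring

lemma deriv_Efam : deriv Efam = fun x => 4 * x - 6 * x ^ 3 := by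
  rw [Efam_eq]
  funext x
  have h : HasDerivAt (fun ρ : ℝ => 2 * ρ ^ 2 - 3 / 2 * ρ ^ 4) (4 * x - 6 * x ^ 3) x := by
    have := ((hasDerivAt_pow 2 x).const_mul 2).sub ((hasDerivAt_pow 4 x).const_mul (3/2))
    refine this.congr_deriv ?_
    ring
  exact h.deriv

lemma sq_s : Real.sqrt (2 / 3) ^ 2 = 2 / 3 := Real.sq_sqrt (by norm_num)

/-- along the family of relative equilibria of the axisymmetric volcano
system, `ρ = √(2/3)` is a critical point of the energy `E(ρ)` and a nondegenerate
maximum; for `ρ ∈ (√(2/3), 1]` the linearization `[[0,1],[−U_μ''(ρ),0]]` of the reduced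
`(r,p_r)` dynamics has a positive real eigenvalue (hyperbolic), while for
`ρ ∈ (0, √(2/3))` all its (complex) eigenvalues are purely imaginary (elliptic). -/
theorem statement7 :
    deriv Efam (Real.sqrt (2 / 3)) = 0 ∧
    deriv (deriv Efam) (Real.sqrt (2 / 3)) < 0 ∧
    IsLocalMax Efam (Real.sqrt (2 / 3)) ∧
    (∀ ρ : ℝ, Real.sqrt (2 / 3) < ρ → ρ ≤ 1 →
      ∃ lam : ℝ, 0 < lam ∧ ∃ v : Fin 2 → ℝ, v ≠ 0 ∧
        Matrix.mulVec !![0, 1; -Upp ρ, 0] v = lam • v) ∧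
    (∀ ρ : ℝ, 0 < ρ → ρ < Real.sqrt (2 / 3) →
      ∀ lam : ℂ, (∃ v : Fin 2 → ℂ, v ≠ 0 ∧
        Matrix.mulVec !![(0 : ℂ), 1; (-Upp ρ : ℂ), 0] v = lam • v) → lam.re = 0) := by
  have hs0 : (0:ℝ) ≤ Real.sqrt (2/3) := Real.sqrt_nonneg _
  have hs3 : Real.sqrt (2/3) ^ 3 = 2/3 * Real.sqrt (2/3) := by
    have : Real.sqrt (2/3) ^ 3 = Real.sqrt (2/3) ^ 2 * Real.sqrt (2/3) := by ring
    rw [this, sq_s]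
  refine ⟨?_, ?_, ?_, ?_, ?_⟩
  · rw [deriv_Efam]
    simp only [hs3]
    ring
  · rw [deriv_Efam]
    have hd : deriv (fun x : ℝ => 4 * x - 6 * x ^ 3) (Real.sqrt (2/3)) =
        4 - 18 * Real.sqrt (2/3) ^ 2 := by
      have h : HasDerivAt (fun x : ℝ => 4 * x - 6 * x ^ 3)
          (4 - 18 * Real.sqrt (2/3) ^ 2) (Real.sqrt (2/3)) := by
        have := ((hasDerivAt_id (Real.sqrt (2/3))).const_mul 4).sub
          ((hasDerivAt_pow 3 (Real.sqrt (2/3))).const_mul 6)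
        refine this.congr_deriv ?_
        ring
      exact h.deriv
    rw [hd, sq_s]
    norm_num
  · apply IsMaxOn.isLocalMax (s := Set.univ) _ (Filter.univ_mem)
    intro x _
    simp only [Efam_eq, Set.mem_setOf_eq]
    have hx : (Real.sqrt (2/3))^2 = 2/3 := sq_s
    nlinarith [sq_nonneg (x^2 - 2/3), hx]
  · intro ρ hρ1 hρ2
    have hρpos : 0 < ρ := lt_of_le_of_lt hs0 hρ1
    have hρ2' : 2/3 < ρ ^ 2 := by
      calc (2:ℝ)/3 = Real.sqrt (2/3) ^ 2 := sq_s.symm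
      _ < ρ ^ 2 := by nlinarith
    have hU : Upp ρ = 8 - 12 * ρ ^ 2 := Upp_eq hρpos.ne'
    have hpos : 0 < -Upp ρ := by rw [hU]; nlinarith
    refine ⟨Real.sqrt (-Upp ρ), Real.sqrt_pos.mpr hpos, ![1, Real.sqrt (-Upp ρ)], ?_, ?_⟩
    · intro h
      have := congrFun h 0
      simp at this
    · have hsq : Real.sqrt (-Upp ρ) * Real.sqrt (-Upp ρ) = -Upp ρ :=
        Real.mul_self_sqrt hpos.le
      funext i
      fin_cases i <;>
        simp [Matrix.mulVec, dotProduct, Fin.sum_univ_two, hsq]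
  · intro ρ hρ0 hρs lam ⟨v, hv, hmv⟩
    have hρ2 : ρ ^ 2 < 2/3 := by
      calc ρ ^ 2 < Real.sqrt (2/3) ^ 2 := by nlinarith
      _ = 2/3 := sq_s
    have hU : Upp ρ = 8 - 12 * ρ ^ 2 := Upp_eq hρ0.ne'
    have hUpos : 0 < Upp ρ := by rw [hU]; nlinarith
    have h0 := congrFun hmv 0
    have h1 := congrFun hmv 1
    simp [Matrix.mulVec, dotProduct, Fin.sum_univ_two, Matrix.vecHead, Matrix.vecTail] at h0 h1
    -- h0 : v 1 = lam * v 0 ; h1 : -Upp ρ * v 0 = lam * v 1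
    have hv0 : v 0 ≠ 0 := by
      intro h
      apply hv
      funext i
      fin_cases i
      · exact h
      · simpa [h] using h0
    have hlam2 : lam ^ 2 = -(Upp ρ : ℂ) := by
      have : lam ^ 2 * v 0 = -(Upp ρ : ℂ) * v 0 := by
        rw [pow_two, mul_assoc, ← h0]
        linear_combination -h1
      exact mul_right_cancel₀ hv0 this
    have hre : lam.re ^ 2 - lam.im ^ 2 = -(Upp ρ) := by
      have := congrArg Complex.re hlam2
      simpa [pow_two, Complex.mul_re] using this
    have him : lam.re * lam.im = 0 := by
      have := congrArg Complex.im hlam2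
      simp [pow_two, Complex.mul_im] at this
      linarith
    rcases mul_eq_zero.mp him with h | h
    · exact h
    · exfalso
      nlinarith [sq_nonneg lam.re]
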